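/- The real span of the matrices F_j = Λ^j − Λ^{−j} (j ≥ 1) is a maximal commutative Lie subalgebra of the Lie algebra AS(R) of antisymmetric matrices in LT_Z(R): any antisymmetric A with finitely many nonzero upper diagonals commuting with all F_j is a real linear combination of the F_j. -/

import Mathlib

noncomputable def matMul {R : Type*} [CommRing R] (A B : ℤ → ℤ → R) : ℤ → ℤ → R :=
  fun i j => ∑ᶠ k, A i k * B k j

def LTZ {R : Type*} [CommRing R] (A : ℤ → ℤ → R) : Prop :=
  ∃ N : ℤ, ∀ i j : ℤ, N < j - i → A i j = 0

def shiftPow (m : ℤ) : ℤ → ℤ → ℝ :=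
  fun i j => if j = i + m then 1 else 0

/-- `A^T = -A`. -/
def AntiSymmetric' (A : ℤ → ℤ → ℝ) : Prop :=
  ∀ i j : ℤ, A j i = -A i j

/-- The basic directions `F_j = Λ^j - Λ^{-j}`, `j ≥ 1`. -/
def Fset : Set (ℤ → ℤ → ℝ) :=
  {A | ∃ j : ℤ, 1 ≤ j ∧ A = shiftPow j - shiftPow (-j)}

/-- Auxiliary: `A` is a Toeplitz matrix given by a finitely supported odd diagonal
function `c`. -/
def DiagRep (A : ℤ → ℤ → ℝ) : Prop :=
  ∃ c : ℤ → ℝ, (Function.support c).Finite ∧ (∀ m, c (-m) = -c m) ∧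
    ∀ i j, A i j = c (j - i)

lemma diagRep_of_mem_span {A : ℤ → ℤ → ℝ} (hA : A ∈ Submodule.span ℝ Fset) :
    DiagRep A := by
  induction hA using Submodule.span_induction with
  | mem x hx =>
    obtain ⟨j, hj, rfl⟩ := hx
    refine ⟨fun m => if m = j then 1 else if m = -j then -1 else 0, ?_, ?_, ?_⟩
    · apply Set.Finite.subset ((Set.finite_singleton (-j)).insert j)
      intro m hm
      simp only [Function.mem_support, ne_eq] at hm
      simp only [Set.mem_insert_iff, Set.mem_singleton_iff]
      by_contra hcon
      push_neg at hcon
      exact hm (by rw [if_neg hcon.1, if_neg hcon.2])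
    · intro m
      show (if -m = j then (1:ℝ) else if -m = -j then -1 else 0)
          = -(if m = j then (1:ℝ) else if m = -j then -1 else 0)
      split_ifs <;> first | ring1 | omega | (exfalso; omega)
    · intro i k
      show (shiftPow j - shiftPow (-j)) i k
          = if k - i = j then (1:ℝ) else if k - i = -j then -1 else 0
      simp only [Pi.sub_apply, shiftPow]
      split_ifs <;> first | ring1 | omega | (exfalso; omega)
  | zero => exact ⟨0, by simp, by simp, by simp⟩
  | add x y hx hy ihx ihy =>
    obtain ⟨c, hc, hoc, hxc⟩ := ihx
    obtain ⟨d, hd, hod, hyd⟩ := ihy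
    refine ⟨c + d, (hc.union hd).subset (Function.support_add _ _), ?_, ?_⟩
    · intro m; simp only [Pi.add_apply, hoc m, hod m]; ring
    · intro i j; simp [hxc, hyd]
  | smul r x hx ihx =>
    obtain ⟨c, hc, hoc, hxc⟩ := ihx
    refine ⟨r • c, hc.subset ?_, ?_, ?_⟩
    · intro m hm
      simp only [Function.mem_support, Pi.smul_apply, smul_eq_mul, ne_eq] at hm
      simp only [Function.mem_support, ne_eq]
      intro h
      rw [h, mul_zero] at hm
      exact hm rfl
    · intro m; simp only [Pi.smul_apply, smul_eq_mul, hoc m]; ring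
    · intro i j; simp [hxc]

lemma mem_span_of_diagRep {A : ℤ → ℤ → ℝ} (h : DiagRep A) :
    A ∈ Submodule.span ℝ Fset := by
  obtain ⟨c, hc, hodd, hA⟩ := h
  have hc0 : c 0 = 0 := by have h0 := hodd 0; rw [neg_zero] at h0; linarith
  obtain ⟨N, hN0, hN⟩ : ∃ N : ℤ, 0 ≤ N ∧ ∀ m, N < m → c m = 0 := by
    obtain ⟨N, hN⟩ := hc.bddAbove
    refine ⟨max N 0, le_max_right _ _, fun m hm => ?_⟩
    by_contra h
    have : m ≤ N := hN (Function.mem_support.mpr h)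
    omega
  have hN' : ∀ m, m < -N → c m = 0 := by
    intro m hm
    have h0 := hodd (-m)
    rw [neg_neg] at h0
    rw [h0, hN (-m) (by omega), neg_zero]
  have key : A = ∑ m ∈ Finset.Icc (1:ℤ) N, c m • (shiftPow m - shiftPow (-m)) := by
    funext i j
    simp only [Finset.sum_apply, Pi.smul_apply, Pi.sub_apply, smul_eq_mul]
    rw [hA]
    have hterm : ∀ m ∈ Finset.Icc (1:ℤ) N,
        c m * (shiftPow m i j - shiftPow (-m) i j)
          = (if m = j - i then c (j - i) else 0)
            + (if m = i - j then c (j - i) else 0) := by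
      intro m hm
      simp only [Finset.mem_Icc] at hm
      simp only [shiftPow]
      split_ifs <;> first
        | ring1
        | omega
        | (exfalso; omega)
        | (rw [show j - i = m by omega]; ring)
        | (rw [show j - i = -m by omega, hodd m]; ring)
    rw [Finset.sum_congr rfl hterm, Finset.sum_add_distrib,
      Finset.sum_ite_eq' _ (j - i) (fun _ => c (j - i)),
      Finset.sum_ite_eq' _ (i - j) (fun _ => c (j - i))]
    by_cases h1 : j - i ∈ Finset.Icc (1:ℤ) N
    · rw [if_pos h1, if_neg (by simp only [Finset.mem_Icc] at h1 ⊢; omega)]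
      ring
    · rw [if_neg h1]
      by_cases h2 : i - j ∈ Finset.Icc (1:ℤ) N
      · rw [if_pos h2]; ring
      · rw [if_neg h2]
        simp only [Finset.mem_Icc, not_and, not_le] at h1 h2
        rcases lt_trichotomy (j - i) 0 with h | h | h
        · have hz : c (i - j) = 0 := by
            rcases lt_or_ge N (i - j) with hh | hh
            · exact hN _ hh
            · exfalso; omega
          have ho := hodd (i - j)
          rw [show -(i - j) = j - i by ring] at ho
          rw [ho, hz]; ring
        · rw [h, hc0]; ring
        · rw [hN (j - i) (by omega)]; ring
  rw [key]
  apply Submodule.sum_mem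
  intro m hm
  simp only [Finset.mem_Icc] at hm
  exact Submodule.smul_mem _ _ (Submodule.subset_span ⟨m, hm.1, rfl⟩)

lemma matMul_comm_of_diagRep {A B : ℤ → ℤ → ℝ} (hA : DiagRep A) (hB : DiagRep B) :
    matMul A B = matMul B A := by
  obtain ⟨a, -, -, ha⟩ := hA
  obtain ⟨b, -, -, hb⟩ := hB
  funext i j
  show (∑ᶠ k, A i k * B k j) = ∑ᶠ k, B i k * A k j
  have hpt : ∀ k, A i k * B k j = (fun l => B i l * A l j) (Equiv.subLeft (i + j) k) := by
    intro k
    simp only [Equiv.subLeft_apply]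
    rw [ha, hb, ha, hb,
      show i + j - k - i = j - k by ring, show j - (i + j - k) = k - i by ring]
    ring
  rw [finsum_congr hpt]
  exact finsum_comp_equiv (Equiv.subLeft (i + j)) (f := fun l => B i l * A l j)

lemma matMul_F_right (A : ℤ → ℤ → ℝ) {j : ℤ} (hj : 1 ≤ j) (i k : ℤ) :
    matMul A (shiftPow j - shiftPow (-j)) i k = A i (k - j) - A i (k + j) := by
  show (∑ᶠ l, A i l * (shiftPow j - shiftPow (-j)) l k) = _
  have hsub : Function.support (fun l => A i l * (shiftPow j - shiftPow (-j)) l k)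
      ⊆ ↑({k - j, k + j} : Finset ℤ) := by
    intro l hl
    simp only [Function.mem_support, ne_eq] at hl
    simp only [Finset.coe_insert, Finset.coe_singleton, Set.mem_insert_iff,
      Set.mem_singleton_iff]
    by_contra h
    push_neg at h
    apply hl
    simp only [Pi.sub_apply, shiftPow]
    rw [if_neg (by omega), if_neg (by omega)]
    ring
  rw [finsum_eq_sum_of_support_subset _ hsub,
    Finset.sum_pair (show k - j ≠ k + j by omega)]
  simp only [Pi.sub_apply, shiftPow]
  split_ifs <;> first | ring1 | omega | (exfalso; omega)

lemma matMul_F_left (A : ℤ → ℤ → ℝ) {j : ℤ} (hj : 1 ≤ j) (i k : ℤ) :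
    matMul (shiftPow j - shiftPow (-j)) A i k = A (i + j) k - A (i - j) k := by
  show (∑ᶠ l, (shiftPow j - shiftPow (-j)) i l * A l k) = _
  have hsub : Function.support (fun l => (shiftPow j - shiftPow (-j)) i l * A l k)
      ⊆ ↑({i + j, i - j} : Finset ℤ) := by
    intro l hl
    simp only [Function.mem_support, ne_eq] at hl
    simp only [Finset.coe_insert, Finset.coe_singleton, Set.mem_insert_iff,
      Set.mem_singleton_iff]
    by_contra h
    push_neg at h
    apply hl
    simp only [Pi.sub_apply, shiftPow]
    rw [if_neg (by omega), if_neg (by omega)]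
    ring
  rw [finsum_eq_sum_of_support_subset _ hsub,
    Finset.sum_pair (show i + j ≠ i - j by omega)]
  simp only [Pi.sub_apply, shiftPow]
  split_ifs <;> first | ring1 | omega | (exfalso; omega)

lemma diagRep_of_comm {A : ℤ → ℤ → ℝ} (hL : LTZ A) (hS : AntiSymmetric' A)
    (hcm : matMul A (shiftPow 1 - shiftPow (-1)) = matMul (shiftPow 1 - shiftPow (-1)) A) :
    DiagRep A := by
  obtain ⟨N0, hN0⟩ := hL
  set N : ℤ := max N0 0 with hNdef
  have hvan : ∀ i j, N < j - i → A i j = 0 := fun i j h => hN0 i j (by omega)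
  have hvan' : ∀ i j, N < i - j → A i j = 0 := by
    intro i j h
    rw [hS j i, hvan j i (by omega), neg_zero]
  have h1 : ∀ i k : ℤ, A i (k - 1) - A i (k + 1) = A (i + 1) k - A (i - 1) k := by
    intro i k
    have h := congrFun (congrFun hcm i) k
    rw [matMul_F_right A le_rfl i k, matMul_F_left A le_rfl i k] at h
    exact h
  have hstep : ∀ i j : ℤ,
      A i j - A (i + 1) (j + 1) = -(A (i - 1) (j + 1) - A (i - 1 + 1) (j + 1 + 1)) := by
    intro i j
    have h := h1 i (j + 1)
    rw [show j + 1 - 1 = j by ring] at h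
    rw [show i - 1 + 1 = i by ring]
    linarith
  have hiter : ∀ n : ℕ, ∀ i j : ℤ,
      A i j - A (i + 1) (j + 1)
        = (-1) ^ n * (A (i - n) (j + n) - A (i - n + 1) (j + n + 1)) := by
    intro n
    induction n with
    | zero => intro i j; simp
    | succ n ih =>
      intro i j
      push_cast
      rw [ih i j, hstep (i - n) (j + n),
        show i - ((n : ℤ) + 1) = i - n - 1 by ring,
        show j + ((n : ℤ) + 1) = j + n + 1 by ring]
      ring
  have hdiff0 : ∀ i j : ℤ, A i j - A (i + 1) (j + 1) = 0 := by
    intro i j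
    obtain ⟨n, hn⟩ : ∃ n : ℕ, N < (j + (n : ℤ)) - (i - (n : ℤ)) := by
      refine ⟨(N + i - j).toNat + 1, ?_⟩
      have h := Int.self_le_toNat (N + i - j)
      push_cast
      omega
    rw [hiter n i j, hvan _ _ hn, hvan _ _ (by omega)]
    ring
  have htoe : ∀ t : ℤ, ∀ i j : ℤ, A (i + t) (j + t) = A i j := by
    intro t
    induction t using Int.induction_on with
    | zero => simp
    | succ k ih =>
      intro i j
      rw [show i + ((k : ℤ) + 1) = (i + k) + 1 by ring,
        show j + ((k : ℤ) + 1) = (j + k) + 1 by ring]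
      have h := hdiff0 (i + k) (j + k)
      have h2 := ih i j
      linarith
    | pred k ih =>
      intro i j
      rw [show i + (-(k : ℤ) - 1) = i - (k + 1) by ring,
        show j + (-(k : ℤ) - 1) = j - (k + 1) by ring]
      have h := hdiff0 (i - (k + 1)) (j - (k + 1))
      rw [show i - ((k : ℤ) + 1) + 1 = i + -(k : ℤ) by ring,
        show j - ((k : ℤ) + 1) + 1 = j + -(k : ℤ) by ring] at h
      have h2 := ih i j
      linarith
  refine ⟨fun m => A 0 m, (Set.finite_Icc (-N) N).subset ?_, ?_, ?_⟩
  · intro m hm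
    simp only [Function.mem_support, ne_eq] at hm
    simp only [Set.mem_Icc]
    constructor
    · by_contra h
      push_neg at h
      exact hm (hvan' 0 m (by omega))
    · by_contra h
      push_neg at h
      exact hm (hvan 0 m (by omega))
  · intro m
    show A 0 (-m) = -A 0 m
    have h := htoe m 0 (-m)
    rw [zero_add, show -m + m = 0 by ring] at h
    rw [← h, hS 0 m]
  · intro i j
    show A i j = A 0 (j - i)
    have h := htoe i 0 (j - i)
    rw [zero_add, show j - i + i = j by ring] at h
    exact h

/-- The real span of the `F_j` is a maximal commutative Lie subalgebra of the
antisymmetric matrices in `LT_ℤ(ℝ)`: it is commutative, consists of antisymmetric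
matrices in `LT_ℤ(ℝ)`, and any antisymmetric `A ∈ LT_ℤ(ℝ)` commuting with all
`F_j` is a real linear combination of the `F_j`. -/
theorem statement5 :
    (∀ A ∈ Submodule.span ℝ Fset, LTZ A ∧ AntiSymmetric' A) ∧
    (∀ A ∈ Submodule.span ℝ Fset, ∀ B ∈ Submodule.span ℝ Fset,
        matMul A B - matMul B A = 0) ∧
    (∀ A : ℤ → ℤ → ℝ, LTZ A → AntiSymmetric' A →
        (∀ F ∈ Fset, matMul A F = matMul F A) →
        A ∈ Submodule.span ℝ Fset) := by
  refine ⟨?_, ?_, ?_⟩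
  · intro A hA
    obtain ⟨c, hc, hodd, hrep⟩ := diagRep_of_mem_span hA
    constructor
    · obtain ⟨N, hN⟩ := hc.bddAbove
      refine ⟨N, fun i j h => ?_⟩
      rw [hrep]
      by_contra hne
      have : j - i ≤ N := hN (Function.mem_support.mpr hne)
      omega
    · intro i j
      rw [hrep, hrep, show i - j = -(j - i) by ring, hodd]
  · intro A hA B hB
    rw [matMul_comm_of_diagRep (diagRep_of_mem_span hA) (diagRep_of_mem_span hB), sub_self]
  · intro A hL hS hcomm
    exact mem_span_of_diagRep
      (diagRep_of_comm hL hS (hcomm _ ⟨1, le_rfl, rfl⟩))
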